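/- Consider graphs in the half-edge formalism whose half-edges are coloured either 'straight' or 'wavy', with the involution colour-preserving. Call such a graph a φ²A-graph if it is finite, connected, every vertex is incident to exactly two straight half-edges and one wavy half-edge, and every wavy half-edge is internal (not fixed by the involution). Let G_S be the graph with two vertices joined by an internal wavy edge, each vertex additionally carrying two external straight half-edges. Let L be the smallest set of isomorphism classes of such coloured graphs such that: (i) G_S ∈ L; (ii) if G ∈ L and f ≠ f' are two straight external half-edges of G, then the graph obtained by joining f and f' into an internal edge belongs to L; (iii) if G ∈ L and f is a straight external half-edge of G, then the graph obtained by taking the disjoint union of G with a fresh copy of G_S and joining f to one straight external half-edge of that copy belongs to L. Then L is exactly the set of isomorphism classes of φ²A-graphs. -/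

import Mathlib

open scoped Classical

noncomputable section

/-- A finite graph in the half-edge formalism whose half-edges are coloured either
'straight' (`false`) or 'wavy' (`true`). -/
structure ColouredGraph : Type 1 where
  V : Type
  F : Type
  [fintV : Fintype V]
  [fintF : Fintype F]
  att : F → V
  inv : F → F
  colour : F → Bool

attribute [instance] ColouredGraph.fintV ColouredGraph.fintF

namespace ColouredGraph

/-- Isomorphism of coloured half-edge graphs. -/
def Iso (G G' : ColouredGraph) : Prop :=
  ∃ (eV : G.V ≃ G'.V) (eF : G.F ≃ G'.F),
    (∀ f, eV (G.att f) = G'.att (eF f)) ∧ (∀ f, eF (G.inv f) = G'.inv (eF f)) ∧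
    (∀ f, G'.colour (eF f) = G.colour f)

/-- Adjacency through an internal edge. -/
def Adj (G : ColouredGraph) (u v : G.V) : Prop :=
  ∃ f, G.inv f ≠ f ∧ G.att f = u ∧ G.att (G.inv f) = v

/-- Connectedness. -/
def Connected (G : ColouredGraph) : Prop :=
  Nonempty G.V ∧ ∀ u v : G.V, Relation.ReflTransGen G.Adj u v

end ColouredGraph

/-- The start graph `G_S` of the `φ²A`-theory: two vertices joined by an internal wavy
edge, each vertex additionally carrying two external straight half-edges. -/
def GS : ColouredGraph where
  V := Bool
  F := Bool × Fin 3
  att := fun p => p.1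
  inv := fun p => if p.2 = 2 then (!p.1, p.2) else p
  colour := fun p => decide (p.2 = 2)

/-- Join two straight external half-edges `f ≠ f'` of `G` into an internal edge. -/
def joinExt (G : ColouredGraph) (f f' : G.F) : ColouredGraph where
  V := G.V
  F := G.F
  att := G.att
  inv := fun g => if g = f then f' else if g = f' then f else G.inv g
  colour := G.colour

/-- Disjoint union of `G` with a fresh copy of `G_S`, joining the half-edge `f` of `G`
to the half-edge `g` of that copy. -/
def attachGS (G : ColouredGraph) (f : G.F) (g : Bool × Fin 3) : ColouredGraph where
  V := G.V ⊕ Bool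
  F := G.F ⊕ (Bool × Fin 3)
  att := Sum.elim (fun a => Sum.inl (G.att a)) (fun b => Sum.inr b.1)
  inv := Sum.elim
    (fun a => if a = f then Sum.inr g else Sum.inl (G.inv a))
    (fun b => if b = g then Sum.inl f
      else if b.2 = 2 then Sum.inr (!b.1, b.2) else Sum.inr b)
  colour := Sum.elim G.colour (fun b => decide (b.2 = 2))

/-- The smallest (isomorphism-invariant) class of coloured half-edge graphs containing
`G_S` and closed under joining two straight external half-edges and under attaching a
fresh copy of `G_S` along a straight external half-edge. -/
inductive InLangA : ColouredGraph → Prop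
  | start : InLangA GS
  | join {G : ColouredGraph} (hG : InLangA G) (f f' : G.F)
      (hf : G.inv f = f) (hf' : G.inv f' = f') (hne : f ≠ f')
      (hcf : G.colour f = false) (hcf' : G.colour f' = false) :
      InLangA (joinExt G f f')
  | attach {G : ColouredGraph} (hG : InLangA G) (f : G.F)
      (hf : G.inv f = f) (hcf : G.colour f = false)
      (g : Bool × Fin 3) (hg : ¬ g.2 = 2) : InLangA (attachGS G f g)
  | iso {G G' : ColouredGraph} (hG : InLangA G) (h : G.Iso G') : InLangA G'

/-- A `φ²A`-graph: finite, connected, colour-preserving involution, every vertex has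
exactly two straight and one wavy half-edge, and every wavy half-edge is internal. -/
def IsPhi2AGraph (G : ColouredGraph) : Prop :=
  Function.Involutive G.inv ∧
  (∀ f, G.colour (G.inv f) = G.colour f) ∧
  G.Connected ∧
  (∀ v : G.V, Fintype.card {f : G.F // G.att f = v ∧ G.colour f = false} = 2) ∧
  (∀ v : G.V, Fintype.card {f : G.F // G.att f = v ∧ G.colour f = true} = 1) ∧
  (∀ f, G.colour f = true → G.inv f ≠ f)

namespace Phi2A

open ColouredGraph

/-- The number of internal straight half-edges. -/
def nIS (G : ColouredGraph) : ℕ :=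
  Fintype.card {h : G.F // G.colour h = false ∧ G.inv h ≠ h}

theorem adj_symm {G : ColouredGraph} (h1 : Function.Involutive G.inv) :
    Symmetric G.Adj := by
  rintro u v ⟨k, hk, rfl, rfl⟩
  refine ⟨G.inv k, ?_, rfl, by rw [h1 k]⟩
  rw [h1 k]; exact fun e => hk e.symm

theorem rt_adj_symm {G : ColouredGraph} (h1 : Function.Involutive G.inv) :
    Symmetric (Relation.ReflTransGen G.Adj) :=
  fun _ _ h => (@Relation.ReflTransGen.symmetric _ _ ⟨fun a b h' => adj_symm h1 h'⟩).symm _ _ h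


theorem card_congr' {α β : Type} (i1 : Fintype α) (i2 : Fintype β) (e : α ≃ β) :
    @Fintype.card α i1 = @Fintype.card β i2 := @Fintype.card_congr α β i1 i2 e

theorem card_lt' {α β : Type} (i1 : Fintype α) (i2 : Fintype β) (f : α → β)
    (hf : Function.Injective f) {b : β} (hb : b ∉ Set.range f) :
    @Fintype.card α i1 < @Fintype.card β i2 :=
  @Fintype.card_lt_of_injective_of_notMem α β i1 i2 f hf b hb

theorem card_two_cases {α : Type} [Fintype α] (h : Fintype.card α = 2) :
    ∃ a b : α, a ≠ b ∧ ∀ c, c = a ∨ c = b := by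
  obtain ⟨a, b, hab⟩ := Fintype.exists_pair_of_one_lt_card (α := α) (by omega)
  refine ⟨a, b, hab, ?_⟩
  have hc : ({a, b} : Finset α).card = 2 := by
    rw [Finset.card_insert_of_notMem (by simpa using hab), Finset.card_singleton]
  have huniv := Finset.eq_univ_of_card ({a, b} : Finset α) (hc.trans h.symm)
  intro c
  have : c ∈ ({a, b} : Finset α) := huniv ▸ Finset.mem_univ c
  simpa using this

theorem card_eq_two_of {α : Type} [Fintype α] (a b : α) (hne : a ≠ b)
    (hall : ∀ c, c = a ∨ c = b) : Fintype.card α = 2 := by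
  have huniv : (Finset.univ : Finset α) = {a, b} := by
    ext c; simpa using hall c
  rw [← Finset.card_univ, huniv, Finset.card_insert_of_notMem (by simpa using hne),
    Finset.card_singleton]

theorem straight_pair {G : ColouredGraph} (hG : IsPhi2AGraph G) (v : G.V) :
    ∃ a b : G.F, a ≠ b ∧ G.att a = v ∧ G.colour a = false ∧ G.att b = v ∧ G.colour b = false ∧
      ∀ h, G.att h = v → G.colour h = false → h = a ∨ h = b := by
  obtain ⟨x, y, hxy, hall⟩ := card_two_cases (hG.2.2.2.1 v)
  refine ⟨x.1, y.1, fun e => hxy (Subtype.ext e), x.2.1, x.2.2, y.2.1, y.2.2, ?_⟩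
  intro h ha hc
  rcases hall ⟨h, ha, hc⟩ with h' | h'
  · exact Or.inl (congrArg Subtype.val h')
  · exact Or.inr (congrArg Subtype.val h')

theorem wavy_unique {G : ColouredGraph} (hG : IsPhi2AGraph G) (v : G.V) :
    ∃ w : G.F, G.att w = v ∧ G.colour w = true ∧
      ∀ h, G.att h = v → G.colour h = true → h = w := by
  obtain ⟨x, hall⟩ := Fintype.card_eq_one_iff.mp (hG.2.2.2.2.1 v)
  exact ⟨x.1, x.2.1, x.2.2, fun h ha hc => congrArg Subtype.val (hall ⟨h, ha, hc⟩)⟩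

theorem wavy_partner_ne {G : ColouredGraph} (hG : IsPhi2AGraph G) {w : G.F}
    (hc : G.colour w = true) : G.att (G.inv w) ≠ G.att w := by
  intro e
  obtain ⟨w', -, -, huniq⟩ := wavy_unique hG (G.att w)
  have e1 := huniq (G.inv w) e (by rw [hG.2.1 w, hc])
  have e2 := huniq w rfl hc
  exact hG.2.2.2.2.2 w hc (e1.trans e2.symm)

/-! ### Transfer of `IsPhi2AGraph` along isomorphisms -/

theorem iso_phi2A {G G' : ColouredGraph} (h : G.Iso G') (hG : IsPhi2AGraph G) :
    IsPhi2AGraph G' := by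
  obtain ⟨eV, eF, hatt, hinv, hcol⟩ := h
  obtain ⟨h1, h2, ⟨hne, hconn⟩, h4, h5, h6⟩ := hG
  have hinv' : ∀ x, G'.inv x = eF (G.inv (eF.symm x)) := by
    intro x; rw [hinv, Equiv.apply_symm_apply]
  have hcol' : ∀ x, G'.colour x = G.colour (eF.symm x) := by
    intro x; conv_lhs => rw [← eF.apply_symm_apply x, hcol]
  have hmap : ∀ u v, G.Adj u v → G'.Adj (eV u) (eV v) := by
    rintro u v ⟨k, hk, rfl, rfl⟩
    refine ⟨eF k, ?_, (hatt k).symm, ?_⟩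
    · rw [← hinv]; exact fun e => hk (eF.injective e)
    · rw [← hinv, ← hatt]
  refine ⟨?_, ?_, ⟨⟨eV hne.some⟩, ?_⟩, ?_, ?_, ?_⟩
  · intro x
    rw [hinv' x, hinv', Equiv.symm_apply_apply, h1, Equiv.apply_symm_apply]
  · intro x
    rw [hinv' x, hcol, h2, ← hcol']
  · intro u v
    have h := Relation.ReflTransGen.lift eV (fun a b hab => hmap a b hab) _ _
      (hconn (eV.symm u) (eV.symm v))
    simpa [Function.onFun] using h
  · intro v'
    have e : {f : G'.F // G'.att f = v' ∧ G'.colour f = false} ≃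
        {f : G.F // G.att f = eV.symm v' ∧ G.colour f = false} := by
      refine Equiv.subtypeEquiv eF.symm fun x => ?_
      have hx : G'.att x = eV (G.att (eF.symm x)) := by
        conv_lhs => rw [← eF.apply_symm_apply x, ← hatt]
      rw [hx, hcol' x]
      constructor
      · rintro ⟨hl, hr⟩; exact ⟨by rw [← hl, Equiv.symm_apply_apply], hr⟩
      · rintro ⟨hl, hr⟩; exact ⟨by rw [hl, Equiv.apply_symm_apply], hr⟩
    exact (Fintype.card_congr e).trans (h4 _)
  · intro v'
    have e : {f : G'.F // G'.att f = v' ∧ G'.colour f = true} ≃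
        {f : G.F // G.att f = eV.symm v' ∧ G.colour f = true} := by
      refine Equiv.subtypeEquiv eF.symm fun x => ?_
      have hx : G'.att x = eV (G.att (eF.symm x)) := by
        conv_lhs => rw [← eF.apply_symm_apply x, ← hatt]
      rw [hx, hcol' x]
      constructor
      · rintro ⟨hl, hr⟩; exact ⟨by rw [← hl, Equiv.symm_apply_apply], hr⟩
      · rintro ⟨hl, hr⟩; exact ⟨by rw [hl, Equiv.apply_symm_apply], hr⟩
    exact (Fintype.card_congr e).trans (h5 _)
  · intro x hx e
    rw [hinv' x] at e
    refine h6 (eF.symm x) (by rw [← hcol' x, hx]) ?_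
    have := congrArg eF.symm e
    rwa [Equiv.symm_apply_apply] at this

end Phi2A

namespace Phi2A

open ColouredGraph

theorem gs_phi2A : IsPhi2AGraph GS := by
  refine ⟨show ∀ p : Bool × Fin 3, @Eq (Bool × Fin 3) (GS.inv (GS.inv p)) p by
    rintro ⟨b, i⟩; fin_cases i <;> cases b <;> simp [GS],
    show ∀ p : Bool × Fin 3, GS.colour (GS.inv p) = GS.colour p by
    rintro ⟨b, i⟩; fin_cases i <;> cases b <;> simp [GS],
    ⟨⟨false⟩, ?_⟩, ?_, ?_,
    show ∀ p : Bool × Fin 3, GS.colour p = true → ¬ @Eq (Bool × Fin 3) (GS.inv p) p by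
    rintro ⟨b, i⟩; fin_cases i <;> cases b <;> simp [GS]⟩
  · intro u v
    cases u <;> cases v
    · exact Relation.ReflTransGen.refl
    · exact Relation.ReflTransGen.single
        ⟨(false, 2), show ((true, 2) : Bool × Fin 3) ≠ (false, 2) by decide, rfl, rfl⟩
    · exact Relation.ReflTransGen.single
        ⟨(true, 2), show ((false, 2) : Bool × Fin 3) ≠ (true, 2) by decide, rfl, rfl⟩
    · exact Relation.ReflTransGen.refl
  · intro v
    refine card_eq_two_of ⟨(v, 0), rfl, rfl⟩ ⟨(v, 1), rfl, rfl⟩ ?_ ?_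
    · intro e
      have h2 : (0 : Fin 3) = 1 := congrArg (fun x => x.1.2) e
      exact absurd h2 (by decide)
    · rintro ⟨⟨a, i⟩, ha, hc⟩
      have hi : ¬ (i = 2) := of_decide_eq_false hc
      have ha' : a = v := ha
      subst ha'
      have : i = 0 ∨ i = 1 := by omega
      rcases this with rfl | rfl
      · left; rfl
      · right; rfl
  · intro v
    refine Fintype.card_eq_one_iff.mpr ⟨⟨(v, 2), rfl, rfl⟩, ?_⟩
    rintro ⟨⟨a, i⟩, ha, hc⟩
    have hi : i = 2 := of_decide_eq_true hc
    have ha' : a = v := ha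
    subst ha'
    subst hi
    rfl

theorem join_phi2A {G : ColouredGraph} (hG : IsPhi2AGraph G) {f f' : G.F}
    (hf : G.inv f = f) (hf' : G.inv f' = f') (hne : f ≠ f')
    (hcf : G.colour f = false) (hcf' : G.colour f' = false) :
    IsPhi2AGraph (joinExt G f f') := by
  obtain ⟨h1, h2, ⟨hnev, hconn⟩, h4, h5, h6⟩ := hG
  have hJ : ∀ g : G.F, (joinExt G f f').inv g =
      if g = f then f' else if g = f' then f else G.inv g := fun g => rfl
  refine ⟨?_, ?_, ⟨hnev, ?_⟩, h4, h5, ?_⟩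
  · intro (g : G.F)
    show (joinExt G f f').inv ((joinExt G f f').inv g) = g
    rw [hJ g]
    by_cases hgf : g = f
    · rw [if_pos hgf, hJ, if_neg (Ne.symm hne), if_pos rfl, hgf]
    · by_cases hgf' : g = f'
      · rw [if_neg hgf, if_pos hgf', hJ, if_pos rfl, hgf']
      · rw [if_neg hgf, if_neg hgf', hJ]
        have e1 : G.inv g ≠ f := fun e => hgf (by rw [← h1 g, e, hf])
        have e2 : G.inv g ≠ f' := fun e => hgf' (by rw [← h1 g, e, hf'])
        rw [if_neg e1, if_neg e2, h1]
  · intro (g : G.F)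
    show G.colour ((joinExt G f f').inv g) = G.colour g
    rw [hJ g]
    by_cases hgf : g = f
    · rw [if_pos hgf, hcf', hgf, hcf]
    · by_cases hgf' : g = f'
      · rw [if_neg hgf, if_pos hgf', hcf, hgf', hcf']
      · rw [if_neg hgf, if_neg hgf', h2]
  · intro u v
    refine Relation.ReflTransGen.mono ?_ _ _ (hconn u v)
    rintro a b ⟨k, hk, rfl, rfl⟩
    have hkf : k ≠ f := fun e => hk (by rw [e, hf])
    have hkf' : k ≠ f' := fun e => hk (by rw [e, hf'])
    refine ⟨k, ?_, rfl, ?_⟩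
    · rw [hJ k, if_neg hkf, if_neg hkf']; exact hk
    · show G.att ((joinExt G f f').inv k) = G.att (G.inv k)
      rw [hJ k, if_neg hkf, if_neg hkf']
  · intro (g : G.F) hg
    have hg' : G.colour g = true := hg
    have hgf : g ≠ f := by
      intro e; rw [e, hcf] at hg'; exact Bool.false_ne_true hg'
    have hgf' : g ≠ f' := by
      intro e; rw [e, hcf'] at hg'; exact Bool.false_ne_true hg'
    show ¬ (joinExt G f f').inv g = g
    rw [hJ g, if_neg hgf, if_neg hgf']
    exact h6 g hg'

end Phi2A

namespace Phi2A

open ColouredGraph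

theorem attach_phi2A {G : ColouredGraph} (hG : IsPhi2AGraph G) {f : G.F}
    (hf : G.inv f = f) (hcf : G.colour f = false) {g : Bool × Fin 3} (hg : ¬ g.2 = 2) :
    IsPhi2AGraph (attachGS G f g) := by
  obtain ⟨h1, h2, ⟨hnev, hconn⟩, h4, h5, h6⟩ := hG
  set A := attachGS G f g with hAdef
  have e1 : ∀ a : G.F, A.inv (Sum.inl a) =
      if a = f then Sum.inr g else Sum.inl (G.inv a) := fun _ => rfl
  have e2 : ∀ b : Bool × Fin 3, A.inv (Sum.inr b) =
      if b = g then Sum.inl f else if b.2 = 2 then Sum.inr (!b.1, b.2) else Sum.inr b :=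
    fun _ => rfl
  have hinvA : Function.Involutive A.inv := by
    rintro (a | b)
    · rw [e1 a]
      by_cases haf : a = f
      · rw [if_pos haf, e2 g, if_pos rfl, haf]
      · rw [if_neg haf, e1 (G.inv a)]
        have hne2 : G.inv a ≠ f := fun e => haf (by rw [← h1 a, e, hf])
        rw [if_neg hne2, h1]
    · rw [e2 b]
      by_cases hbg : b = g
      · rw [if_pos hbg, e1 f, if_pos rfl, hbg]
      · rw [if_neg hbg]
        by_cases hb2 : b.2 = 2
        · rw [if_pos hb2, e2 (!b.1, b.2)]
          have hne3 : ((!b.1, b.2) : Bool × Fin 3) ≠ g := by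
            intro e; exact hg (by rw [← e]; exact hb2)
          rw [if_neg hne3, if_pos (show ((!b.1, b.2) : Bool × Fin 3).2 = 2 from hb2)]
          simp; rfl
        · rw [if_neg hb2, e2 b, if_neg hbg, if_neg hb2]
  have hcolA : ∀ p, A.colour (A.inv p) = A.colour p := by
    rintro (a | b)
    · rw [e1 a]
      by_cases haf : a = f
      · rw [if_pos haf]
        show decide (g.2 = 2) = G.colour a
        rw [haf, hcf, decide_eq_false hg]
      · rw [if_neg haf]; exact h2 a
    · rw [e2 b]
      by_cases hbg : b = g
      · rw [if_pos hbg]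
        show G.colour f = decide (b.2 = 2)
        rw [hcf, hbg, decide_eq_false hg]
      · rw [if_neg hbg]
        by_cases hb2 : b.2 = 2
        · rw [if_pos hb2]; rfl
        · rw [if_neg hb2]
  have hliftAdj : ∀ u v, G.Adj u v → A.Adj (Sum.inl u) (Sum.inl v) := by
    rintro u v ⟨k, hk, rfl, rfl⟩
    have hkf : k ≠ f := fun e => hk (by rw [e, hf])
    refine ⟨Sum.inl k, ?_, rfl, ?_⟩
    · rw [e1 k, if_neg hkf]; exact fun e => hk (Sum.inl.inj e)
    · rw [e1 k, if_neg hkf]; rfl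
  have hstep1 : A.Adj (Sum.inr g.1) (Sum.inl (G.att f)) := by
    refine ⟨Sum.inr g, ?_, rfl, ?_⟩
    · rw [e2 g, if_pos rfl]; exact fun e => Sum.inl_ne_inr e
    · rw [e2 g, if_pos rfl]; rfl
  have hstep2 : A.Adj (Sum.inr (!g.1)) (Sum.inr g.1) := by
    have hne_g : ((!g.1, 2) : Bool × Fin 3) ≠ g := by
      intro e; exact hg (by rw [← e])
    refine ⟨Sum.inr (!g.1, 2), ?_, rfl, ?_⟩
    · rw [e2 (!g.1, 2), if_neg hne_g,
        if_pos (show ((!g.1, 2) : Bool × Fin 3).2 = 2 from rfl)]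
      intro e
      have := congrArg Prod.fst (Sum.inr.inj e)
      simp at this
    · rw [e2 (!g.1, 2), if_neg hne_g,
        if_pos (show ((!g.1, 2) : Bool × Fin 3).2 = 2 from rfl)]
      show Sum.inr (!(!g.1)) = Sum.inr g.1
      simp
  have hto : ∀ p : A.V, Relation.ReflTransGen A.Adj p (Sum.inl (G.att f)) := by
    rintro (u | x)
    · exact Relation.ReflTransGen.lift Sum.inl (fun a b h => hliftAdj a b h) _ _
        (hconn u (G.att f))
    · by_cases hx : x = g.1
      · subst hx; exact Relation.ReflTransGen.single hstep1
      · have hx' : x = !g.1 := by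
          cases hgg : g.1 <;> cases x <;> simp_all
        subst hx'
        exact (Relation.ReflTransGen.single hstep2).tail hstep1
  refine ⟨hinvA, hcolA, ⟨⟨Sum.inr false⟩, ?_⟩, ?_, ?_, ?_⟩
  · intro u v
    exact (hto u).trans (rt_adj_symm hinvA (hto v))
  · rintro (v | x)
    · obtain ⟨a, b, hab, haa, hac, hba, hbc, hclass⟩ := straight_pair
        ⟨h1, h2, ⟨hnev, hconn⟩, h4, h5, h6⟩ v
      refine card_eq_two_of ⟨Sum.inl a, congrArg Sum.inl haa, hac⟩
        ⟨Sum.inl b, congrArg Sum.inl hba, hbc⟩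
        (fun e => hab (Sum.inl.inj (congrArg Subtype.val e))) ?_
      rintro ⟨k | bb, hp1, hp2⟩
      · rcases hclass k (Sum.inl.inj hp1) hp2 with rfl | rfl
        · exact Or.inl rfl
        · exact Or.inr rfl
      · exact absurd hp1 (fun e => Sum.inr_ne_inl e)
    · refine card_eq_two_of ⟨Sum.inr (x, 0), rfl, rfl⟩ ⟨Sum.inr (x, 1), rfl, rfl⟩ ?_ ?_
      · intro e
        have h3 : ((x, 0) : Bool × Fin 3) = (x, 1) := Sum.inr.inj (congrArg Subtype.val e)
        have h4' : (0 : Fin 3) = 1 := congrArg Prod.snd h3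
        exact absurd h4' (by decide)
      · rintro ⟨k | ⟨bx, bi⟩, hp1, hp2⟩
        · exact absurd hp1 (fun e => Sum.inl_ne_inr e)
        · have hbx : bx = x := Sum.inr.inj hp1
          have hbi : ¬ (bi = 2) := of_decide_eq_false hp2
          subst hbx
          have : bi = 0 ∨ bi = 1 := by omega
          rcases this with rfl | rfl
          · exact Or.inl rfl
          · exact Or.inr rfl
  · rintro (v | x)
    · obtain ⟨w, hwa, hwc, hwu⟩ := wavy_unique ⟨h1, h2, ⟨hnev, hconn⟩, h4, h5, h6⟩ v
      refine Fintype.card_eq_one_iff.mpr ⟨⟨Sum.inl w, congrArg Sum.inl hwa, hwc⟩, ?_⟩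
      rintro ⟨k | bb, hp1, hp2⟩
      · have := hwu k (Sum.inl.inj hp1) hp2
        subst this; rfl
      · exact absurd hp1 (fun e => Sum.inr_ne_inl e)
    · refine Fintype.card_eq_one_iff.mpr ⟨⟨Sum.inr (x, 2), rfl, rfl⟩, ?_⟩
      rintro ⟨k | ⟨bx, bi⟩, hp1, hp2⟩
      · exact absurd hp1 (fun e => Sum.inl_ne_inr e)
      · have hbx : bx = x := Sum.inr.inj hp1
        have hbi : bi = 2 := of_decide_eq_true hp2
        subst hbx; subst hbi; rfl
  · rintro (a | b) hp
    · have hp' : G.colour a = true := hp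
      have haf : a ≠ f := by
        intro e; rw [e, hcf] at hp'; exact Bool.false_ne_true hp'
      show ¬ A.inv (Sum.inl a) = Sum.inl a
      rw [e1 a, if_neg haf]
      exact fun e => h6 a hp' (Sum.inl.inj e)
    · have hb2 : b.2 = 2 := of_decide_eq_true hp
      have hbg : b ≠ g := by
        intro e; exact hg (by rw [← e]; exact hb2)
      show ¬ A.inv (Sum.inr b) = Sum.inr b
      rw [e2 b, if_neg hbg, if_pos hb2]
      intro e
      have := congrArg Prod.fst (Sum.inr.inj e)
      simp at this
  
theorem forward {G : ColouredGraph} (h : InLangA G) : IsPhi2AGraph G := by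
  induction h with
  | start => exact gs_phi2A
  | join hG f f' hf hf' hne hcf hcf' ih => exact join_phi2A ih hf hf' hne hcf hcf'
  | attach hG f hf hcf g hg ih => exact attach_phi2A ih hf hcf hg
  | iso hG h ih => exact iso_phi2A h ih

end Phi2A

namespace Phi2A

open ColouredGraph

/-- Cut the internal edge `{f, G.inv f}` into two external half-edges. -/
@[reducible] def cutEdge (G : ColouredGraph) (f : G.F) : ColouredGraph where
  V := G.V
  F := G.F
  att := G.att
  inv := fun h => if h = f ∨ h = G.inv f then h else G.inv h
  colour := G.colour

theorem cutEdge_inv_def (G : ColouredGraph) (f h : G.F) :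
    (cutEdge G f).inv h = if h = f ∨ h = G.inv f then h else G.inv h := rfl

theorem cutEdge_inv_fix1 (G : ColouredGraph) (f : G.F) : (cutEdge G f).inv f = f := by
  rw [cutEdge_inv_def, if_pos (Or.inl rfl)]

theorem cutEdge_inv_fix2 (G : ColouredGraph) (f : G.F) :
    (cutEdge G f).inv (G.inv f) = G.inv f := by
  rw [cutEdge_inv_def, if_pos (Or.inr rfl)]

theorem cutEdge_inv_other (G : ColouredGraph) {f h : G.F} (h1 : h ≠ f) (h2 : h ≠ G.inv f) :
    (cutEdge G f).inv h = G.inv h := by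
  rw [cutEdge_inv_def, if_neg (by rintro (e | e) <;> [exact h1 e; exact h2 e])]

theorem cutEdge_involutive {G : ColouredGraph} (h1 : Function.Involutive G.inv) (f : G.F) :
    Function.Involutive (cutEdge G f).inv := by
  intro h
  by_cases hh : h = f ∨ h = G.inv f
  · have e : (cutEdge G f).inv h = h := by rw [cutEdge_inv_def, if_pos hh]
    rw [e, e]
  · push_neg at hh
    rw [cutEdge_inv_other G hh.1 hh.2]
    have g1 : G.inv h ≠ f := fun e => hh.2 (by rw [← h1 h, e])
    have g2 : G.inv h ≠ G.inv f := fun e => hh.1 (by rw [← h1 h, e, h1])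
    rw [cutEdge_inv_other G g1 g2, h1]

theorem cutEdge_of_inv {G : ColouredGraph} (h1 : Function.Involutive G.inv) (f : G.F) :
    cutEdge G (G.inv f) = cutEdge G f := by
  have e : (fun h => if h = G.inv f ∨ h = G.inv (G.inv f) then h else G.inv h) =
      (fun h => if h = f ∨ h = G.inv f then h else G.inv h) := by
    funext h
    rw [h1 f]
    exact if_congr or_comm rfl rfl
  exact congrArg (fun i => ColouredGraph.mk G.V G.F G.att i G.colour) e

theorem joinExt_cutEdge {G : ColouredGraph} (h1 : Function.Involutive G.inv) (f : G.F) :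
    joinExt (cutEdge G f) f (G.inv f) = G := by
  have e : (fun g => if g = f then G.inv f else if g = G.inv f then f
      else (cutEdge G f).inv g) = G.inv := by
    funext g
    by_cases hgf : g = f
    · rw [if_pos hgf, hgf]
    · by_cases hgf' : g = G.inv f
      · rw [if_neg hgf, if_pos hgf', hgf', h1]
      · rw [if_neg hgf, if_neg hgf', cutEdge_inv_other G hgf hgf']
  exact congrArg (fun i => ColouredGraph.mk G.V G.F G.att i G.colour) e

theorem nIS_cut_lt {G : ColouredGraph} (h1 : Function.Involutive G.inv) {f : G.F}
    (hcf : G.colour f = false) (hif : G.inv f ≠ f) : nIS (cutEdge G f) < nIS G := by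
  have hmap : ∀ h : {h : G.F // (cutEdge G f).colour h = false ∧ (cutEdge G f).inv h ≠ h},
      G.colour h.1 = false ∧ G.inv h.1 ≠ h.1 := by
    rintro ⟨h, hc, hi⟩
    refine ⟨hc, fun e => hi ?_⟩
    by_cases hh : h = f ∨ h = G.inv f
    · rw [cutEdge_inv_def, if_pos hh]
    · push_neg at hh
      rw [cutEdge_inv_other G hh.1 hh.2, e]
  have hinj : Function.Injective
      (fun h : {h : G.F // (cutEdge G f).colour h = false ∧ (cutEdge G f).inv h ≠ h} =>
        (⟨h.1, hmap h⟩ : {h : G.F // G.colour h = false ∧ G.inv h ≠ h})) := by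
    intro a b hab
    have hab' := congrArg Subtype.val hab
    exact Subtype.ext hab' 
  have hnm : (⟨f, hcf, hif⟩ : {h : G.F // G.colour h = false ∧ G.inv h ≠ h}) ∉
      Set.range (fun h : {h : G.F // (cutEdge G f).colour h = false ∧ (cutEdge G f).inv h ≠ h} =>
        (⟨h.1, hmap h⟩ : {h : G.F // G.colour h = false ∧ G.inv h ≠ h})) := by
    rintro ⟨⟨h, hc, hi⟩, he⟩
    have hhf : h = f := congrArg Subtype.val he
    subst hhf
    exact hi (cutEdge_inv_fix1 G h)
  exact card_lt' _ _ _ hinj hnm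

/-- After cutting an edge, every vertex is reachable from one of its two endpoints. -/
theorem cut_reach {G : ColouredGraph} (hG : IsPhi2AGraph G) (f : G.F) (v : G.V) :
    Relation.ReflTransGen (cutEdge G f).Adj (G.att f) v ∨
      Relation.ReflTransGen (cutEdge G f).Adj (G.att (G.inv f)) v := by
  obtain ⟨h1, -, ⟨-, hconn⟩, -⟩ := hG
  have h := hconn (G.att f) v
  induction h with
  | refl => exact Or.inl Relation.ReflTransGen.refl
  | tail hr hadj ih =>
    obtain ⟨k, hk, rfl, rfl⟩ := hadj
    by_cases hkk : k = f ∨ k = G.inv f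
    · rcases hkk with rfl | rfl
      · exact Or.inr Relation.ReflTransGen.refl
      · rw [h1 f]
        exact Or.inl Relation.ReflTransGen.refl
    · push_neg at hkk
      have hstep : (cutEdge G f).Adj (G.att k) (G.att (G.inv k)) := by
        refine ⟨k, ?_, rfl, ?_⟩
        · rw [cutEdge_inv_other G hkk.1 hkk.2]; exact hk
        · rw [cutEdge_inv_other G hkk.1 hkk.2]
      rcases ih with h' | h'
      · exact Or.inl (h'.tail hstep)
      · exact Or.inr (h'.tail hstep)

/-- If the two endpoints of a cut edge are still connected, the cut graph is connected. -/
theorem cut_conn_of {G : ColouredGraph} (hG : IsPhi2AGraph G) (f : G.F)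
    (h : Relation.ReflTransGen (cutEdge G f).Adj (G.att (G.inv f)) (G.att f)) :
    (cutEdge G f).Connected := by
  have hi := cutEdge_involutive hG.1 f
  have hsym := rt_adj_symm hi
  have key : ∀ v : G.V, Relation.ReflTransGen (cutEdge G f).Adj (G.att (G.inv f)) v := by
    intro v
    rcases cut_reach hG f v with h' | h'
    · exact h.trans h'
    · exact h'
  exact ⟨hG.2.2.1.1, fun u v => (hsym (key u)).trans (key v)⟩

theorem cut_phi2A {G : ColouredGraph} (hG : IsPhi2AGraph G) {f : G.F}
    (hcf : G.colour f = false) (hif : G.inv f ≠ f)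
    (hc : (cutEdge G f).Connected) : IsPhi2AGraph (cutEdge G f) := by
  obtain ⟨h1, h2, -, h4, h5, h6⟩ := hG
  refine ⟨cutEdge_involutive h1 f, ?_, hc, h4, h5, ?_⟩
  · intro h
    show G.colour ((cutEdge G f).inv h) = G.colour h
    by_cases hh : h = f ∨ h = G.inv f
    · rw [cutEdge_inv_def, if_pos hh]
    · push_neg at hh
      rw [cutEdge_inv_other G hh.1 hh.2, h2]
  · intro h hcol
    have hcol' : G.colour h = true := hcol
    have g1 : h ≠ f := by
      intro e; rw [e, hcf] at hcol'; exact Bool.false_ne_true hcol'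
    have g2 : h ≠ G.inv f := by
      intro e
      rw [e, h2, hcf] at hcol'
      exact Bool.false_ne_true hcol'
    show ¬ (cutEdge G f).inv h = h
    rw [cutEdge_inv_other G g1 g2]
    exact h6 h hcol'

end Phi2A

namespace Phi2A

open ColouredGraph

/-- The graph `G` restricted to the complement of the two vertices `v1, v2`;
half-edges whose partner lies over `{v1, v2}` become external. -/
@[reducible] def restrict2 (G : ColouredGraph) (v1 v2 : G.V) : ColouredGraph where
  V := {v : G.V // v ≠ v1 ∧ v ≠ v2}
  F := {h : G.F // G.att h ≠ v1 ∧ G.att h ≠ v2}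
  att := fun h => ⟨G.att h.1, h.2⟩
  inv := fun h => if hc : G.att (G.inv h.1) ≠ v1 ∧ G.att (G.inv h.1) ≠ v2
    then ⟨G.inv h.1, hc⟩ else h
  colour := fun h => G.colour h.1

/-- The six half-edges of a leaf unit, arranged as a copy of those of `G_S`. -/
def sixF {α : Type} (x y z u v w : α) : Bool × Fin 3 → α := fun b =>
  bif b.1 then (if b.2 = 0 then u else if b.2 = 1 then v else w)
  else (if b.2 = 0 then x else if b.2 = 1 then y else z)

theorem leaf_case {G : ColouredGraph} (hG : IsPhi2AGraph G)
    {f w1 s t1 t2 : G.F} {v1 v2 : G.V}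
    (hv1 : G.att (G.inv f) = v1) (hfi : G.inv f ≠ f) (hfc : G.colour f = false)
    (hw1a : G.att w1 = v1) (hw1c : G.colour w1 = true) (hv2 : G.att (G.inv w1) = v2)
    (hsa : G.att s = v1) (hsc : G.colour s = false) (hsx : G.inv s = s) (hsne : s ≠ G.inv f)
    (ht1a : G.att t1 = v2) (ht1c : G.colour t1 = false) (ht1x : G.inv t1 = t1)
    (ht2a : G.att t2 = v2) (ht2c : G.colour t2 = false) (ht2x : G.inv t2 = t2)
    (htne : t1 ≠ t2)
    (hv12 : v1 ≠ v2) (haf1 : G.att f ≠ v1) (haf2 : G.att f ≠ v2)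
    (honly : ∀ h, G.colour h = false → G.inv h ≠ h →
      G.att h = v1 ∨ G.att h = v2 → h = G.inv f)
    (huniq1 : ∀ h, G.att h = v1 → G.colour h = true → h = w1)
    (huniq2 : ∀ h, G.att h = v2 → G.colour h = true → h = G.inv w1)
    (hcls1 : ∀ h, G.att h = v1 → G.colour h = false → h = G.inv f ∨ h = s)
    (hcls2 : ∀ h, G.att h = v2 → G.colour h = false → h = t1 ∨ h = t2) :
    ∃ fR : (restrict2 G v1 v2).F,
      (restrict2 G v1 v2).inv fR = fR ∧ (restrict2 G v1 v2).colour fR = false ∧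
      IsPhi2AGraph (restrict2 G v1 v2) ∧ nIS (restrict2 G v1 v2) < nIS G ∧
      (attachGS (restrict2 G v1 v2) fR (false, 0)).Iso G := by
  obtain ⟨h1, h2, ⟨hnev, hconn⟩, h4, h5, h6⟩ := hG
  set R := restrict2 G v1 v2 with hRdef
  have hw1i : G.inv w1 ≠ w1 := h6 w1 hw1c
  have hiwc : G.colour (G.inv w1) = true := by rw [h2, hw1c]
  have hifc : G.colour (G.inv f) = false := by rw [h2, hfc]
  set fR : R.F := ⟨f, haf1, haf2⟩ with hfRdef
  -- the partner of a half-edge outside the unit (other than `f`) is outside the unit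
  have hkey : ∀ h : G.F, G.att h ≠ v1 → G.att h ≠ v2 → h ≠ f →
      G.att (G.inv h) ≠ v1 ∧ G.att (G.inv h) ≠ v2 := by
    intro h ha1 ha2 hhf
    by_cases hint : G.inv h = h
    · rw [hint]; exact ⟨ha1, ha2⟩
    constructor
    · intro e
      cases hcol : G.colour (G.inv h) with
      | false =>
        have hii : G.inv (G.inv h) ≠ G.inv h := by
          rw [h1]; exact fun e2 => hint e2.symm
        have he := honly (G.inv h) hcol hii (Or.inl e)
        have : h = f := by rw [← h1 h, he, h1]
        exact hhf this
      | true =>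
        have he := huniq1 (G.inv h) e hcol
        have : h = G.inv w1 := by rw [← h1 h, he]
        exact ha2 (by rw [this]; exact hv2)
    · intro e
      cases hcol : G.colour (G.inv h) with
      | false =>
        have hii : G.inv (G.inv h) ≠ G.inv h := by
          rw [h1]; exact fun e2 => hint e2.symm
        have he := honly (G.inv h) hcol hii (Or.inr e)
        have : h = f := by rw [← h1 h, he, h1]
        exact hhf this
      | true =>
        have he := huniq2 (G.inv h) e hcol
        have : h = w1 := by rw [← h1 h, he, h1]
        exact ha1 (by rw [this]; exact hw1a)
  have hRinv_f : R.inv fR = fR := by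
    show dite _ _ _ = fR
    rw [dif_neg (fun c => c.1 hv1)]
  have hRinv_other : ∀ (h : R.F) (hh : h.1 ≠ f),
      R.inv h = ⟨G.inv h.1, hkey h.1 h.2.1 h.2.2 hh⟩ := by
    intro h hh
    show dite _ _ _ = _
    rw [dif_pos (hkey h.1 h.2.1 h.2.2 hh)]
  -- involution on R
  have hRinv : Function.Involutive R.inv := by
    intro h
    by_cases hh : h.1 = f
    · have : h = fR := Subtype.ext hh
      rw [this, hRinv_f, hRinv_f]
    · rw [hRinv_other h hh]
      have hni : G.inv h.1 ≠ f := by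
        intro e
        exact h.2.1 (by rw [← h1 h.1, e]; exact hv1)
      rw [hRinv_other _ hni]
      exact Subtype.ext (h1 h.1)
  have hRcol : ∀ h, R.colour (R.inv h) = R.colour h := by
    intro h
    by_cases hh : h.1 = f
    · have : h = fR := Subtype.ext hh
      rw [this, hRinv_f]
    · rw [hRinv_other h hh]
      exact h2 h.1
  -- connectivity of R
  have hRTcast : ∀ {x y z : R.V}, y = z → Relation.ReflTransGen R.Adj x y →
      Relation.ReflTransGen R.Adj x z := by
    rintro x y z rfl h
    exact h
  have hproj : ∀ (a : G.V) (ha : a ≠ v1 ∧ a ≠ v2) (b : G.V),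
      Relation.ReflTransGen G.Adj a b →
      (∀ hb : b ≠ v1 ∧ b ≠ v2,
        Relation.ReflTransGen R.Adj ⟨a, ha⟩ ⟨b, hb⟩) ∧
      ((b = v1 ∨ b = v2) →
        Relation.ReflTransGen R.Adj ⟨a, ha⟩ ⟨G.att f, haf1, haf2⟩) := by
    intro a ha b hrt
    induction hrt with
    | refl =>
      constructor
      · intro hb; exact Relation.ReflTransGen.refl
      · rintro (e | e)
        · exact absurd e ha.1
        · exact absurd e ha.2
    | tail hr hadj ih =>
      obtain ⟨k, hk, rfl, rfl⟩ := hadj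
      constructor
      · intro hc
        by_cases hbb : G.att k = v1 ∨ G.att k = v2
        · have hkc : G.colour k = false := by
            cases hcol : G.colour k with
            | false => rfl
            | true =>
              exfalso
              rcases hbb with e | e
              · have hkw := huniq1 k e hcol
                exact hc.2 (by rw [hkw]; exact hv2)
              · have hkw := huniq2 k e hcol
                exact hc.1 (by rw [hkw, h1]; exact hw1a)
          have hkf := honly k hkc hk hbb
          have hccc : G.att (G.inv k) = G.att f := by rw [hkf, h1]
          have e3 : (⟨G.att (G.inv k), hc⟩ : R.V) = ⟨G.att f, haf1, haf2⟩ :=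
            Subtype.ext hccc
          exact hRTcast e3.symm (ih.2 hbb)
        · push_neg at hbb
          have hkf : k ≠ f := fun e => hc.1 (by rw [e]; exact hv1)
          have hstep : R.Adj ⟨G.att k, hbb⟩ ⟨G.att (G.inv k), hc⟩ := by
            refine ⟨⟨k, hbb⟩, ?_, rfl, ?_⟩
            · rw [hRinv_other ⟨k, hbb⟩ hkf]
              intro e
              exact hk (congrArg Subtype.val e)
            · rw [hRinv_other ⟨k, hbb⟩ hkf]
          exact (ih.1 hbb).tail hstep
      · intro hcbad
        by_cases hbb : G.att k = v1 ∨ G.att k = v2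
        · exact ih.2 hbb
        · push_neg at hbb
          have hq : G.colour (G.inv k) = false := by
            cases hcol : G.colour (G.inv k) with
            | false => rfl
            | true =>
              exfalso
              rcases hcbad with e | e
              · have he := huniq1 (G.inv k) e hcol
                have hkk : k = G.inv w1 := by rw [← h1 k, he]
                exact hbb.2 (by rw [hkk]; exact hv2)
              · have he := huniq2 (G.inv k) e hcol
                have hkk : k = w1 := by rw [← h1 k, he, h1]
                exact hbb.1 (by rw [hkk]; exact hw1a)
          have hik : G.inv (G.inv k) ≠ G.inv k := by
            rw [h1]; exact fun e => hk e.symm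
          have he := honly (G.inv k) hq hik hcbad
          have hkf : k = f := by rw [← h1 k, he, h1]
          have e3 : (⟨G.att k, hbb⟩ : R.V) = ⟨G.att f, haf1, haf2⟩ :=
            Subtype.ext (show G.att k = G.att f by rw [hkf])
          exact hRTcast e3 (ih.1 hbb)
  have hRconn : R.Connected := by
    refine ⟨⟨⟨G.att f, haf1, haf2⟩⟩, fun u v => ?_⟩
    have := (hproj u.1 u.2 v.1 (hconn u.1 v.1)).1 v.2
    exact this
  -- degrees
  have hequiv : ∀ (v : R.V) (c : Bool),
      {p : R.F // R.att p = v ∧ R.colour p = c} ≃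
        {k : G.F // G.att k = v.1 ∧ G.colour k = c} := by
    intro v c
    refine ⟨fun p => ⟨p.1.1, congrArg Subtype.val p.2.1, p.2.2⟩,
      fun k => ⟨⟨k.1, by rw [k.2.1]; exact v.2.1, by rw [k.2.1]; exact v.2.2⟩,
        Subtype.ext k.2.1, k.2.2⟩, ?_, ?_⟩
    · intro p; exact Subtype.ext (Subtype.ext rfl)
    · intro k; exact Subtype.ext rfl
  have hRphi : IsPhi2AGraph R := by
    refine ⟨hRinv, hRcol, hRconn, ?_, ?_, ?_⟩
    · intro v; exact (card_congr' _ _ (hequiv v false)).trans (h4 v.1)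
    · intro v; exact (card_congr' _ _ (hequiv v true)).trans (h5 v.1)
    · intro p hp
      have hp' : G.colour p.1 = true := hp
      have hpf : p.1 ≠ f := by
        intro e; rw [e, hfc] at hp'; exact Bool.false_ne_true hp'
      rw [hRinv_other p hpf]
      intro e
      exact h6 p.1 hp' (congrArg Subtype.val e)
  -- the count decreases
  have hmapR : ∀ p : {p : R.F // R.colour p = false ∧ R.inv p ≠ p},
      G.colour p.1.1 = false ∧ G.inv p.1.1 ≠ p.1.1 := by
    rintro ⟨p, hpc, hpi⟩
    refine ⟨hpc, fun e => ?_⟩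
    by_cases hh : p.1 = f
    · exact hpi (by rw [show p = fR from Subtype.ext hh, hRinv_f])
    · refine hpi ?_
      rw [hRinv_other p hh]
      exact Subtype.ext e
  have hnISlt : nIS R < nIS G := by
    have hinj : Function.Injective
        (fun p : {p : R.F // R.colour p = false ∧ R.inv p ≠ p} =>
          (⟨p.1.1, hmapR p⟩ : {h : G.F // G.colour h = false ∧ G.inv h ≠ h})) := by
      intro a b hab
      have hab' := congrArg Subtype.val hab
      exact Subtype.ext (Subtype.ext hab')
    have hnm : (⟨f, hfc, hfi⟩ : {h : G.F // G.colour h = false ∧ G.inv h ≠ h}) ∉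
        Set.range (fun p : {p : R.F // R.colour p = false ∧ R.inv p ≠ p} =>
          (⟨p.1.1, hmapR p⟩ : {h : G.F // G.colour h = false ∧ G.inv h ≠ h})) := by
      rintro ⟨⟨p, hpc, hpi⟩, he⟩
      have hpf : p.1 = f := congrArg Subtype.val he
      exact hpi (by rw [show p = fR from Subtype.ext hpf, hRinv_f])
    exact card_lt' _ _ _ hinj hnm
  -- the isomorphism
  have hAinl : ∀ a : R.F, (attachGS R fR (false, 0)).inv (Sum.inl a) =
      @ite _ (a = fR) (Classical.propDecidable _)
        (Sum.inr ((false, 0) : Bool × Fin 3)) (Sum.inl (R.inv a)) := fun _ => rfl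
  have hAinr : ∀ b : Bool × Fin 3, (attachGS R fR (false, 0)).inv (Sum.inr b) =
      if b = (false, 0) then Sum.inl fR
      else if b.2 = 2 then Sum.inr (!b.1, b.2) else Sum.inr b := fun _ => rfl
  have hne_col : ∀ a b : G.F, G.colour a = false → G.colour b = true → a ≠ b := by
    intro a b ha hb e
    rw [e, hb] at ha
    exact Bool.noConfusion ha
  have hne_att : ∀ a b : G.F, G.att a = v1 → G.att b = v2 → a ≠ b := by
    intro a b ha hb e
    exact hv12 (by rw [← ha, e, hb])
  have hatt6 : ∀ b : Bool × Fin 3,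
      G.att (sixF (G.inv f) s w1 t1 t2 (G.inv w1) b) = bif b.1 then v2 else v1 := by
    rintro ⟨bb, bi⟩
    fin_cases bi <;> cases bb <;>
      simp [sixF, hv1, hsa, hw1a, ht1a, ht2a, hv2]
  have hcol6 : ∀ b : Bool × Fin 3,
      G.colour (sixF (G.inv f) s w1 t1 t2 (G.inv w1) b) = decide (b.2 = 2) := by
    rintro ⟨bb, bi⟩
    fin_cases bi <;> cases bb <;>
      simp [sixF, hifc, hsc, hw1c, ht1c, ht2c, hiwc]
  have d1 : G.inv f ≠ s := Ne.symm hsne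
  have d2 : G.inv f ≠ w1 := hne_col _ _ hifc hw1c
  have d3 : G.inv f ≠ t1 := hne_att _ _ hv1 ht1a
  have d4 : G.inv f ≠ t2 := hne_att _ _ hv1 ht2a
  have d5 : G.inv f ≠ G.inv w1 := hne_col _ _ hifc hiwc
  have d6 : s ≠ w1 := hne_col _ _ hsc hw1c
  have d7 : s ≠ t1 := hne_att _ _ hsa ht1a
  have d8 : s ≠ t2 := hne_att _ _ hsa ht2a
  have d9 : s ≠ G.inv w1 := hne_col _ _ hsc hiwc
  have d10 : w1 ≠ t1 := (hne_col _ _ ht1c hw1c).symm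
  have d11 : w1 ≠ t2 := (hne_col _ _ ht2c hw1c).symm
  have d12 : w1 ≠ G.inv w1 := fun e => hw1i e.symm
  have d13 : t1 ≠ G.inv w1 := hne_col _ _ ht1c hiwc
  have d14 : t2 ≠ G.inv w1 := hne_col _ _ ht2c hiwc
  have hvmap_bij : Function.Bijective
      (Sum.elim (Subtype.val) (fun b => bif b then v2 else v1) : R.V ⊕ Bool → G.V) := by
    constructor
    · rintro (x | x) (y | y) e
      · exact congrArg Sum.inl (Subtype.ext e)
      · exfalso
        cases y
        · exact x.2.1 e
        · exact x.2.2 e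
      · exfalso
        cases x
        · exact y.2.1 e.symm
        · exact y.2.2 e.symm
      · have e' : (bif x then v2 else v1) = (bif y then v2 else v1) := e
        cases x <;> cases y
        · rfl
        · exact absurd e' hv12
        · exact absurd e' (Ne.symm hv12)
        · rfl
    · intro v
      by_cases e1 : v = v1
      · exact ⟨Sum.inr false, e1.symm⟩
      · by_cases e2 : v = v2
        · exact ⟨Sum.inr true, e2.symm⟩
        · exact ⟨Sum.inl ⟨v, e1, e2⟩, rfl⟩
  have hfmap_bij : Function.Bijective
      (Sum.elim (Subtype.val) (sixF (G.inv f) s w1 t1 t2 (G.inv w1)) :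
        (attachGS R fR (false, 0)).F → G.F) := by
    constructor
    · rintro (x | x) (y | y) e
      · exact congrArg Sum.inl (Subtype.ext e)
      · exfalso
        have ha := (congrArg G.att e).trans (hatt6 y)
        rcases y with ⟨yb, yi⟩
        cases yb
        · exact x.2.1 ha
        · exact x.2.2 ha
      · exfalso
        have ha := (congrArg G.att e.symm).trans (hatt6 x)
        rcases x with ⟨xb, xi⟩
        cases xb
        · exact y.2.1 ha
        · exact y.2.2 ha
      · have e' : sixF (G.inv f) s w1 t1 t2 (G.inv w1) x =
            sixF (G.inv f) s w1 t1 t2 (G.inv w1) y := e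
        clear e
        rcases x with ⟨xb, xi⟩
        rcases y with ⟨yb, yi⟩
        fin_cases xi <;> fin_cases yi <;> cases xb <;> cases yb <;>
          simp only [sixF, Bool.cond_true, Bool.cond_false, Fin.isValue] at e' <;>
          first
            | rfl
            | exact absurd e' htne | exact absurd e' htne.symm
            | exact absurd e' d1 | exact absurd e' d1.symm | exact absurd e' d2 | exact absurd e' d2.symm | exact absurd e' d3 | exact absurd e' d3.symm | exact absurd e' d4 | exact absurd e' d4.symm | exact absurd e' d5 | exact absurd e' d5.symm | exact absurd e' d6 | exact absurd e' d6.symm | exact absurd e' d7 | exact absurd e' d7.symm | exact absurd e' d8 | exact absurd e' d8.symm | exact absurd e' d9 | exact absurd e' d9.symm | exact absurd e' d10 | exact absurd e' d10.symm | exact absurd e' d11 | exact absurd e' d11.symm | exact absurd e' d12 | exact absurd e' d12.symm | exact absurd e' d13 | exact absurd e' d13.symm | exact absurd e' d14 | exact absurd e' d14.symm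
    · intro k
      by_cases hk1 : G.att k = v1
      · cases hcol : G.colour k with
        | false =>
          rcases hcls1 k hk1 hcol with rfl | rfl
          · exact ⟨Sum.inr (false, 0), by simp [sixF]⟩
          · exact ⟨Sum.inr (false, 1), by simp [sixF]⟩
        | true =>
          rcases huniq1 k hk1 hcol with rfl
          exact ⟨Sum.inr (false, 2), by simp [sixF]⟩
      · by_cases hk2 : G.att k = v2
        · cases hcol : G.colour k with
          | false =>
            rcases hcls2 k hk2 hcol with rfl | rfl
            · exact ⟨Sum.inr (true, 0), by simp [sixF]⟩
            · exact ⟨Sum.inr (true, 1), by simp [sixF]⟩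
          | true =>
            rcases huniq2 k hk2 hcol with rfl
            exact ⟨Sum.inr (true, 2), by simp [sixF]⟩
        · exact ⟨Sum.inl ⟨k, hk1, hk2⟩, rfl⟩
  refine ⟨fR, hRinv_f, hfc, hRphi, hnISlt, ?_⟩
  refine ⟨Equiv.ofBijective _ hvmap_bij, Equiv.ofBijective _ hfmap_bij, ?_, ?_, ?_⟩
  · rintro (x | b)
    · rfl
    · exact (hatt6 b).symm
  · rintro (x | b)
    · by_cases hx : x = fR
      · subst hx
        rw [hAinl, if_pos rfl]
        show sixF (G.inv f) s w1 t1 t2 (G.inv w1) (false, 0) = G.inv f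
        simp [sixF]
      · rw [hAinl, if_neg hx]
        have hxf : x.1 ≠ f := fun e => hx (Subtype.ext e)
        show (R.inv x).1 = G.inv x.1
        rw [hRinv_other x hxf]
    · rcases b with ⟨bb, bi⟩
      fin_cases bi <;> cases bb <;>
        simp [Equiv.ofBijective, DFunLike.coe, EquivLike.coe, hAinr, sixF, hsx, ht1x, ht2x, h1 w1, h1 f, hfRdef]
  · rintro (x | b)
    · rfl
    · exact hcol6 b

end Phi2A

namespace Phi2A

open ColouredGraph

theorem no_internal_straight {G : ColouredGraph} (hG : IsPhi2AGraph G)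
    (hex : ∀ h : G.F, G.colour h = false → G.inv h = h) : GS.Iso G := by
  obtain ⟨h1, h2, ⟨hnev, hconn⟩, h4, h5, h6⟩ := hG
  obtain ⟨v0⟩ := hnev
  obtain ⟨w, hwa, hwc, hwu⟩ := wavy_unique ⟨h1, h2, ⟨⟨v0⟩, hconn⟩, h4, h5, h6⟩ v0
  have hiwc : G.colour (G.inv w) = true := by rw [h2, hwc]
  have hwi : G.inv w ≠ w := h6 w hwc
  have hne01 : G.att (G.inv w) ≠ v0 := by
    have := wavy_partner_ne ⟨h1, h2, ⟨⟨v0⟩, hconn⟩, h4, h5, h6⟩ hwc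
    rw [hwa] at this; exact this
  obtain ⟨s1, s2, hs12, hs1a, hs1c, hs2a, hs2c, hscls⟩ :=
    straight_pair ⟨h1, h2, ⟨⟨v0⟩, hconn⟩, h4, h5, h6⟩ v0
  obtain ⟨t1, t2, ht12, ht1a, ht1c, ht2a, ht2c, htcls⟩ :=
    straight_pair ⟨h1, h2, ⟨⟨v0⟩, hconn⟩, h4, h5, h6⟩ (G.att (G.inv w))
  obtain ⟨w', hw'a, hw'c, hw'u⟩ :=
    wavy_unique ⟨h1, h2, ⟨⟨v0⟩, hconn⟩, h4, h5, h6⟩ (G.att (G.inv w))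
  have hiw : G.inv w = w' := hw'u (G.inv w) rfl hiwc
  have huniq1 : ∀ h, G.att h = G.att (G.inv w) → G.colour h = true → h = G.inv w :=
    fun h ha hc => (hw'u h ha hc).trans hiw.symm
  have hclass : ∀ x : G.V, x = v0 ∨ x = G.att (G.inv w) := by
    intro x
    have hrt := hconn v0 x
    induction hrt with
    | refl => exact Or.inl rfl
    | tail hr hadj ih =>
      obtain ⟨k, hk, rfl, rfl⟩ := hadj
      cases hcol : G.colour k with
      | false => exact absurd (hex k hcol) hk
      | true =>
        rcases ih with e | e
        · have hkw := hwu k e hcol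
          right; rw [hkw]
        · have hkw := huniq1 k e hcol
          left; rw [hkw, h1, hwa]
  have hexs1 := hex s1 hs1c
  have hexs2 := hex s2 hs2c
  have hext1 := hex t1 ht1c
  have hext2 := hex t2 ht2c
  have hne_col : ∀ a b : G.F, G.colour a = false → G.colour b = true → a ≠ b := by
    intro a b ha hb e
    rw [e, hb] at ha
    exact Bool.noConfusion ha
  have hne_att : ∀ a b : G.F, G.att a = v0 → G.att b = G.att (G.inv w) → a ≠ b := by
    intro a b ha hb e
    exact hne01 (by rw [← hb, ← e, ha])
  have d1 : s1 ≠ s2 := hs12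
  have d2 : s1 ≠ w := hne_col _ _ hs1c hwc
  have d3 : s1 ≠ t1 := hne_att _ _ hs1a ht1a
  have d4 : s1 ≠ t2 := hne_att _ _ hs1a ht2a
  have d5 : s1 ≠ G.inv w := hne_col _ _ hs1c hiwc
  have d6 : s2 ≠ w := hne_col _ _ hs2c hwc
  have d7 : s2 ≠ t1 := hne_att _ _ hs2a ht1a
  have d8 : s2 ≠ t2 := hne_att _ _ hs2a ht2a
  have d9 : s2 ≠ G.inv w := hne_col _ _ hs2c hiwc
  have d10 : w ≠ t1 := (hne_col _ _ ht1c hwc).symm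
  have d11 : w ≠ t2 := (hne_col _ _ ht2c hwc).symm
  have d12 : w ≠ G.inv w := fun e => hwi e.symm
  have d13 : t1 ≠ G.inv w := hne_col _ _ ht1c hiwc
  have d14 : t2 ≠ G.inv w := hne_col _ _ ht2c hiwc
  have htne : t1 ≠ t2 := ht12
  have hvbij : Function.Bijective (fun x : Bool => bif x then G.att (G.inv w) else v0) := by
    constructor
    · intro a b e
      cases a <;> cases b
      · rfl
      · exact absurd e (Ne.symm hne01)
      · exact absurd e hne01
      · rfl
    · intro v
      rcases hclass v with e | e
      · exact ⟨false, e.symm⟩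
      · exact ⟨true, e.symm⟩
  have hfbij : Function.Bijective (sixF s1 s2 w t1 t2 (G.inv w)) := by
    constructor
    · intro x y e'
      rcases x with ⟨xb, xi⟩
      rcases y with ⟨yb, yi⟩
      fin_cases xi <;> fin_cases yi <;> cases xb <;> cases yb <;>
        simp only [sixF, Bool.cond_true, Bool.cond_false, Fin.isValue] at e' <;>
        first
          | rfl
          | exact absurd e' htne | exact absurd e' htne.symm
          | exact absurd e' d1 | exact absurd e' d1.symm
          | exact absurd e' d2 | exact absurd e' d2.symm
          | exact absurd e' d3 | exact absurd e' d3.symm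
          | exact absurd e' d4 | exact absurd e' d4.symm
          | exact absurd e' d5 | exact absurd e' d5.symm
          | exact absurd e' d6 | exact absurd e' d6.symm
          | exact absurd e' d7 | exact absurd e' d7.symm
          | exact absurd e' d8 | exact absurd e' d8.symm
          | exact absurd e' d9 | exact absurd e' d9.symm
          | exact absurd e' d10 | exact absurd e' d10.symm
          | exact absurd e' d11 | exact absurd e' d11.symm
          | exact absurd e' d12 | exact absurd e' d12.symm
          | exact absurd e' d13 | exact absurd e' d13.symm
          | exact absurd e' d14 | exact absurd e' d14.symm
    · intro k
      rcases hclass (G.att k) with e | e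
      · cases hcol : G.colour k with
        | false =>
          rcases hscls k e hcol with rfl | rfl
          · exact ⟨(false, 0), by simp [sixF]⟩
          · exact ⟨(false, 1), by simp [sixF]⟩
        | true =>
          rcases hwu k e hcol with rfl
          exact ⟨(false, 2), by simp [sixF]⟩
      · cases hcol : G.colour k with
        | false =>
          rcases htcls k e hcol with rfl | rfl
          · exact ⟨(true, 0), by simp [sixF]⟩
          · exact ⟨(true, 1), by simp [sixF]⟩
        | true =>
          have hkw := huniq1 k e hcol
          exact ⟨(true, 2), by rw [hkw]; simp [sixF]⟩
  refine ⟨Equiv.ofBijective _ hvbij, Equiv.ofBijective _ hfbij, ?_, ?_, ?_⟩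
  · rintro ⟨bb, bi⟩
    fin_cases bi <;> cases bb <;>
      simp [Equiv.ofBijective, DFunLike.coe, EquivLike.coe, GS, sixF, hs1a, hs2a, hwa, ht1a, ht2a]
  · rintro ⟨bb, bi⟩
    fin_cases bi <;> cases bb <;>
      simp [Equiv.ofBijective, DFunLike.coe, EquivLike.coe, GS, sixF, hexs1, hexs2, hext1, hext2, h1 w]
  · rintro ⟨bb, bi⟩
    fin_cases bi <;> cases bb <;>
      simp [Equiv.ofBijective, DFunLike.coe, EquivLike.coe, GS, sixF, hs1c, hs2c, hwc, ht1c, ht2c, hiwc]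

end Phi2A

namespace Phi2A

open ColouredGraph

theorem backward : ∀ (n : ℕ) (G : ColouredGraph), nIS G ≤ n → IsPhi2AGraph G → InLangA G := by
  intro n
  induction n using Nat.strong_induction_on with
  | _ n IH =>
    intro G hle hG
    have h1 := hG.1
    have h2 := hG.2.1
    have h6 := hG.2.2.2.2.2
    by_cases hex : ∀ h : G.F, G.colour h = false → G.inv h = h
    · exact InLangA.iso InLangA.start (no_internal_straight hG hex)
    push_neg at hex
    by_cases hcut : ∃ h : G.F, G.colour h = false ∧ G.inv h ≠ h ∧ (cutEdge G h).Connected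
    · obtain ⟨f, hfc, hfi, hfconn⟩ := hcut
      have hφ := cut_phi2A hG hfc hfi hfconn
      have hlt := nIS_cut_lt h1 hfc hfi
      have hL := IH (nIS (cutEdge G f)) (lt_of_lt_of_le hlt hle) _ le_rfl hφ
      have hj := InLangA.join hL f (G.inv f) (cutEdge_inv_fix1 G f) (cutEdge_inv_fix2 G f)
        (fun e => hfi e.symm) hfc (show G.colour (G.inv f) = false by rw [h2, hfc])
      rwa [joinExt_cutEdge h1 f] at hj
    push_neg at hcut
    -- every internal straight edge disconnects; find a leaf unit
    classical
    set C : G.F → Finset G.V := fun h => Finset.univ.filter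
      (fun v => Relation.ReflTransGen (cutEdge G h).Adj (G.att (G.inv h)) v) with hCdef
    have hmemC : ∀ (h : G.F) (v : G.V), v ∈ C h ↔
        Relation.ReflTransGen (cutEdge G h).Adj (G.att (G.inv h)) v := by
      intro h v
      rw [hCdef]
      simp [Finset.mem_filter]
    obtain ⟨h0, hh0c, hh0i⟩ := hex
    have hSne : (Finset.univ.filter
        (fun h : G.F => G.colour h = false ∧ G.inv h ≠ h)).Nonempty :=
      ⟨h0, Finset.mem_filter.mpr ⟨Finset.mem_univ _, hh0c, hh0i⟩⟩
    obtain ⟨f, hfS, hfmin⟩ := Finset.exists_min_image _ (fun h => (C h).card) hSne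
    obtain ⟨-, hfc, hfi⟩ := Finset.mem_filter.mp hfS
    have hnotself : ∀ h : G.F, G.colour h = false → G.inv h ≠ h → G.att h ∉ C h := by
      intro h hc hi hm
      exact hcut h hc hi (cut_conn_of hG h ((hmemC h _).mp hm))
    -- every internal straight half-edge attached in `C f` is `G.inv f`
    have hleaf : ∀ h, G.colour h = false → G.inv h ≠ h → G.att h ∈ C f → h = G.inv f := by
      intro h hhc hhi hmem
      by_contra hne'
      have hhf : h ≠ f := by
        rintro rfl
        exact hnotself h hhc hhi hmem
      have hhif : G.inv h ≠ f := fun e => hne' (by rw [← h1 h, e])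
      have hmem' : G.att (G.inv h) ∈ C f := by
        rw [hmemC] at hmem ⊢
        refine hmem.tail ⟨h, ?_, rfl, ?_⟩
        · rw [cutEdge_inv_other G hhf hne']; exact hhi
        · rw [cutEdge_inv_other G hhf hne']
      have hPinvc : G.colour (G.inv h) = false := by rw [h2, hhc]
      have hPinvi : G.inv (G.inv h) ≠ G.inv h := by
        rw [h1]; exact fun e => hhi e.symm
      have hsplit : G.att f ∉ C h ∨ G.att f ∉ C (G.inv h) := by
        by_contra hb
        push_neg at hb
        obtain ⟨b1, b2⟩ := hb
        rw [hmemC] at b1 b2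
        have hinvEq : ∀ g : G.F, (cutEdge G (G.inv h)).inv g = (cutEdge G h).inv g := by
          intro g
          rw [cutEdge_inv_def, cutEdge_inv_def, h1 h]
          exact if_congr or_comm rfl rfl
        have hAdjmap : ∀ u v : G.V, (cutEdge G (G.inv h)).Adj u v → (cutEdge G h).Adj u v := by
          rintro u v ⟨k, hk, h3, h4⟩
          refine ⟨k, ?_, h3, ?_⟩
          · rw [← hinvEq]; exact hk
          · rw [← hinvEq]; exact h4
        have b2' := Relation.ReflTransGen.mono (fun a b hab => hAdjmap a b hab) _ _ b2
        rw [h1 h] at b2'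
        have hsymm := rt_adj_symm (cutEdge_involutive h1 h)
        exact hcut h hhc hhi (cut_conn_of hG h (b1.trans (hsymm b2')))
      obtain ⟨h', hP'c, hP'i, hm1, hm2, hnc⟩ : ∃ h', G.colour h' = false ∧ G.inv h' ≠ h' ∧
          G.att h' ∈ C f ∧ G.att (G.inv h') ∈ C f ∧ G.att f ∉ C h' := by
        rcases hsplit with hs | hs
        · exact ⟨h, hhc, hhi, hmem, hmem', hs⟩
        · refine ⟨G.inv h, hPinvc, hPinvi, hmem', ?_, hs⟩
          rw [h1 h]; exact hmem
      have hself := hnotself h' hP'c hP'i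
      have hsub : C h' ⊆ C f := by
        intro x hx
        rw [hmemC] at hx
        induction hx with
        | refl => exact hm2
        | tail hr hadj ih =>
          obtain ⟨k, hk, rfl, rfl⟩ := hadj
          have hk1 : k ≠ h' := fun e => hk (by rw [e, cutEdge_inv_fix1])
          have hk2 : k ≠ G.inv h' := fun e => hk (by rw [e, cutEdge_inv_fix2])
          have hkg : G.inv k ≠ k := by
            rw [cutEdge_inv_other G hk1 hk2] at hk; exact hk
          have hbCh' : G.att k ∈ C h' := (hmemC h' _).mpr hr
          have hcCh' : G.att ((cutEdge G h').inv k) ∈ C h' :=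
            (hmemC h' _).mpr (hr.tail ⟨k, hk, rfl, rfl⟩)
          by_cases hkf : k = f
          · exfalso
            subst hkf
            exact hnc hbCh'
          · by_cases hkf' : k = G.inv f
            · exfalso
              have he2 : G.att ((cutEdge G h').inv k) = G.att f := by
                rw [cutEdge_inv_other G hk1 hk2, hkf', h1]
              rw [he2] at hcCh'
              exact hnc hcCh'
            · rw [hmemC] at ih ⊢
              refine ih.tail ⟨k, ?_, rfl, ?_⟩
              · rw [cutEdge_inv_other G hkf hkf']; exact hkg
              · rw [cutEdge_inv_other G hkf hkf', cutEdge_inv_other G hk1 hk2]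
      have hstrict : (C h').card < (C f).card :=
        Finset.card_lt_card ((Finset.ssubset_iff_of_subset hsub).mpr
          ⟨G.att h', hm1, fun hmm => hself hmm⟩)
      have hminle := hfmin h' (Finset.mem_filter.mpr ⟨Finset.mem_univ _, hP'c, hP'i⟩)
      exact absurd hstrict (not_lt.mpr hminle)
    -- the leaf unit
    have hv1C : G.att (G.inv f) ∈ C f := (hmemC f _).mpr Relation.ReflTransGen.refl
    obtain ⟨w1, hw1a, hw1c, hw1u⟩ := wavy_unique hG (G.att (G.inv f))
    have hw1i : G.inv w1 ≠ w1 := h6 w1 hw1c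
    have hifc : G.colour (G.inv f) = false := by rw [h2, hfc]
    have hx1 : w1 ≠ f := by
      intro e; rw [e, hfc] at hw1c; exact Bool.noConfusion hw1c
    have hx2 : w1 ≠ G.inv f := by
      intro e; rw [e, hifc] at hw1c; exact Bool.noConfusion hw1c
    have hv2C : G.att (G.inv w1) ∈ C f := by
      rw [hmemC] at hv1C ⊢
      refine hv1C.tail ⟨w1, ?_, hw1a, ?_⟩
      · rw [cutEdge_inv_other G hx1 hx2]; exact hw1i
      · rw [cutEdge_inv_other G hx1 hx2]
    have hv12 : G.att (G.inv w1) ≠ G.att (G.inv f) := by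
      have := wavy_partner_ne hG hw1c
      rw [hw1a] at this; exact this
    obtain ⟨w2, hw2a, hw2c, hw2u⟩ := wavy_unique hG (G.att (G.inv w1))
    have hiw : G.inv w1 = w2 := hw2u (G.inv w1) rfl (by rw [h2, hw1c])
    have huniq2' : ∀ h, G.att h = G.att (G.inv w1) → G.colour h = true → h = G.inv w1 :=
      fun h ha hc => (hw2u h ha hc).trans hiw.symm
    have haf1 : G.att f ≠ G.att (G.inv f) := fun e => (hnotself f hfc hfi) (e ▸ hv1C)
    have haf2 : G.att f ≠ G.att (G.inv w1) := fun e => (hnotself f hfc hfi) (e ▸ hv2C)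
    obtain ⟨a, b, hab, haa, hac, hba, hbc, hclsv1⟩ := straight_pair hG (G.att (G.inv f))
    have hify := hclsv1 (G.inv f) rfl hifc
    obtain ⟨s, hsa, hsc, hsne, hcls1⟩ : ∃ s, G.att s = G.att (G.inv f) ∧
        G.colour s = false ∧ s ≠ G.inv f ∧
        (∀ h, G.att h = G.att (G.inv f) → G.colour h = false → h = G.inv f ∨ h = s) := by
      rcases hify with e | e
      · refine ⟨b, hba, hbc, fun e2 => hab ((e2.trans e).symm), ?_⟩
        intro h ha hc
        rcases hclsv1 h ha hc with e3 | e3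
        · exact Or.inl (by rw [e3, ← e])
        · exact Or.inr e3
      · refine ⟨a, haa, hac, fun e2 => hab (e2.trans e), ?_⟩
        intro h ha hc
        rcases hclsv1 h ha hc with e3 | e3
        · exact Or.inr e3
        · exact Or.inl (by rw [e3, ← e])
    have hsx : G.inv s = s := by
      by_contra hne2
      exact hsne (hleaf s hsc hne2 (by rw [hsa]; exact hv1C))
    obtain ⟨t1, t2, ht12, ht1a, ht1c, ht2a, ht2c, hcls2⟩ :=
      straight_pair hG (G.att (G.inv w1))
    have ht1x : G.inv t1 = t1 := by
      by_contra hne2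
      have he := hleaf t1 ht1c hne2 (by rw [ht1a]; exact hv2C)
      rw [he] at ht1a
      exact hv12 ht1a.symm
    have ht2x : G.inv t2 = t2 := by
      by_contra hne2
      have he := hleaf t2 ht2c hne2 (by rw [ht2a]; exact hv2C)
      rw [he] at ht2a
      exact hv12 ht2a.symm
    have honly' : ∀ h, G.colour h = false → G.inv h ≠ h →
        (G.att h = G.att (G.inv f) ∨ G.att h = G.att (G.inv w1)) → h = G.inv f := by
      intro h hc hi hd
      refine hleaf h hc hi ?_
      rcases hd with e | e
      · rw [e]; exact hv1C
      · rw [e]; exact hv2C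
    obtain ⟨fR, hfix, hcolR, hphiR, hltR, hisoR⟩ :=
      leaf_case hG rfl hfi hfc hw1a hw1c rfl hsa hsc hsx hsne ht1a ht1c ht1x
        ht2a ht2c ht2x ht12 (Ne.symm hv12) haf1 haf2 honly' hw1u huniq2' hcls1 hcls2
    have hL := IH (nIS (restrict2 G (G.att (G.inv f)) (G.att (G.inv w1))))
      (lt_of_lt_of_le hltR hle) _ le_rfl hphiR
    exact InLangA.iso
      (InLangA.attach hL fR hfix hcolR (false, 0) (by decide)) hisoR

end Phi2A

/-- the graph language generated by `G_S` under the two production rules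
is exactly the set of Feynman graphs of the `φ²A`-theory. -/
theorem phi2A_graph_language :
    ∀ G : ColouredGraph, InLangA G ↔ IsPhi2AGraph G := by
  intro G
  constructor
  · exact Phi2A.forward
  · exact fun h => Phi2A.backward (Phi2A.nIS G) G le_rfl h
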